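/- Let φ'(t) = (b/(δ sinh b)) I₀(b√(1 - (2t/δ - 1)²)) for 0 ≤ t ≤ δ and φ'(t) = 0 otherwise, with b, δ > 0, and φ(t) = ∫₀^t φ'(τ) dτ. Then φ(t) = 0 for t ≤ 0, φ is nondecreasing, and φ(t) = 1 for t ≥ δ. -/

import Mathlib

open Real intervalIntegral

/-- Modified Bessel function of the first kind of order zero. -/
noncomputable def besselI0 (x : ℝ) : ℝ :=
  (1 / Real.pi) * ∫ θ in (0:ℝ)..Real.pi, Real.exp (x * Real.cos θ)

/-- Derivative of the Kaiser–Bessel blending window on `[0,δ]`. -/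
noncomputable def kbWindowDeriv (b δ t : ℝ) : ℝ :=
  if 0 ≤ t ∧ t ≤ δ then
    (b / (δ * Real.sinh b)) * besselI0 (b * Real.sqrt (1 - (2 * t / δ - 1) ^ 2))
  else 0

/-- Kaiser–Bessel blending window `φ(t) = ∫₀ᵗ φ'(τ) dτ`. -/
noncomputable def kbWindow (b δ t : ℝ) : ℝ :=
  ∫ τ in (0:ℝ)..t, kbWindowDeriv b δ τ


open MeasureTheory Finset


lemma hasSum_exp_real (x : ℝ) : HasSum (fun n => x ^ n / (Nat.factorial n : ℝ)) (Real.exp x) := by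
  rw [Real.exp_eq_exp_ℝ]
  exact NormedSpace.expSeries_div_hasSum_exp x

lemma hasSum_sinh_odd (x : ℝ) :
    HasSum (fun k => x ^ (2 * k + 1) / (Nat.factorial (2 * k + 1) : ℝ)) (Real.sinh x) := by
  have h : HasSum (fun n => (x ^ n / (Nat.factorial n : ℝ) - (-x) ^ n / (Nat.factorial n : ℝ)) / 2)
      (Real.sinh x) := by
    rw [Real.sinh_eq]
    exact ((hasSum_exp_real x).sub (hasSum_exp_real (-x))).div_const 2
  have hinj : Function.Injective (fun k : ℕ => 2 * k + 1) := fun a b hab => by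
    simpa using hab
  have h0 : ∀ n ∉ Set.range (fun k : ℕ => 2 * k + 1),
      (x ^ n / (Nat.factorial n : ℝ) - (-x) ^ n / (Nat.factorial n : ℝ)) / 2 = 0 := by
    intro n hn
    rcases Nat.even_or_odd n with he | ho
    · rw [he.neg_pow]; ring
    · obtain ⟨k, hk⟩ := ho
      exact absurd ⟨k, by simp; omega⟩ hn
  have h2 := (hinj.hasSum_iff h0).mpr h
  convert h2 using 1
  funext k
  have hodd : Odd (2 * k + 1) := ⟨k, by ring⟩
  simp only [Function.comp, hodd.neg_pow]
  ring

lemma integral_cos_pow_even (k : ℕ) :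
    ∫ θ in (0:ℝ)..π, Real.cos θ ^ (2 * k) = π * ∏ i ∈ range k, (2 * (i:ℝ) + 1) / (2 * i + 2) := by
  induction k with
  | zero => simp
  | succ k ih =>
    have h : 2 * (k + 1) = 2 * k + 2 := by ring
    rw [h, integral_cos_pow, prod_range_succ, ih]
    simp [Real.sin_pi]
    push_cast
    ring

lemma integral_cos_pow_odd (k : ℕ) :
    ∫ θ in (0:ℝ)..π, Real.cos θ ^ (2 * k + 1) = 0 := by
  have h := integral_sin_pow_mul_cos_pow_odd (a := 0) (b := π) 0 k
  simpa using h

lemma integral_one_sub_sq_pow (k : ℕ) :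
    ∫ u in (-1:ℝ)..1, (1 - u ^ 2) ^ k = 2 * ∏ i ∈ range k, (2 * (i:ℝ) + 2) / (2 * i + 3) := by
  have h := integral_sin_pow_mul_cos_pow_odd (a := -(π/2)) (b := π/2) 0 k
  simp only [pow_zero, one_mul, Real.sin_pi_div_two, Real.sin_neg, one_pow] at h
  have h2 : ∫ x in (-(π/2))..(π/2), Real.cos x ^ (2 * k + 1)
      = ∫ x in (0:ℝ)..π, Real.sin x ^ (2 * k + 1) := by
    have h3 := intervalIntegral.integral_comp_add_right
      (a := -(π/2)) (b := π/2) (fun x => Real.sin x ^ (2 * k + 1)) (π/2)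
    simp only [Real.sin_add_pi_div_two] at h3
    rw [h3]
    norm_num
  rw [← h, h2, integral_sin_pow_odd]

lemma besselI0_continuous : Continuous besselI0 := by
  unfold besselI0
  refine continuous_const.mul ?_
  exact intervalIntegral.continuous_parametric_intervalIntegral_of_continuous'
    (f := fun x θ => Real.exp (x * Real.cos θ)) (by fun_prop) 0 π

lemma besselI0_nonneg (x : ℝ) : 0 ≤ besselI0 x := by
  unfold besselI0
  refine mul_nonneg (by positivity) ?_
  exact intervalIntegral.integral_nonneg Real.pi_pos.le (fun θ _ => (Real.exp_pos _).le)

lemma prod_odd_telescope (k : ℕ) :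
    ∏ i ∈ range k, (2 * (i:ℝ) + 1) / (2 * i + 3) = 1 / (2 * k + 1) := by
  induction k with
  | zero => simp
  | succ k ih =>
    rw [prod_range_succ, ih]
    have h1 : 2 * (k:ℝ) + 1 ≠ 0 := by positivity
    have h3 : 2 * (k:ℝ) + 3 ≠ 0 := by positivity
    field_simp
    push_cast
    ring

lemma besselI0_hasSum (x : ℝ) :
    HasSum (fun k => (∏ i ∈ range k, (2 * (i:ℝ) + 1) / (2 * i + 2)) / (Nat.factorial (2 * k) : ℝ)
      * x ^ (2 * k)) (besselI0 x) := by
  have hps : (0:ℝ) ≤ π := Real.pi_pos.le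
  set μ := volume.restrict (Set.Ioc (0:ℝ) π) with hμ
  set F : ℕ → ℝ → ℝ := fun n θ => (x * Real.cos θ) ^ n / (Nat.factorial n : ℝ) with hF
  have hFint : ∀ n : ℕ, Integrable (F n) μ := fun n =>
    Continuous.integrableOn_Ioc (by fun_prop)
  have hvol : (volume (Set.Ioc (0:ℝ) π)).toReal = π := by
    rw [Real.volume_Ioc]
    simp [ENNReal.toReal_ofReal hps]
  have hnorm : ∀ n : ℕ, (∫ θ, ‖F n θ‖ ∂μ) ≤ |x| ^ n / (Nat.factorial n : ℝ) * π := by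
    intro n
    have hb : ∀ θ ∈ Set.Ioc (0:ℝ) π, ‖‖F n θ‖‖ ≤ |x| ^ n / (Nat.factorial n : ℝ) := by
      intro θ _
      rw [norm_norm, hF]
      simp only [norm_div, norm_pow, Real.norm_eq_abs, Nat.abs_cast]
      have h1 : |x * Real.cos θ| ≤ |x| := by
        rw [abs_mul]
        exact mul_le_of_le_one_right (abs_nonneg x) (Real.abs_cos_le_one θ)
      have h2 : |x * Real.cos θ| ^ n ≤ |x| ^ n := pow_le_pow_left₀ (abs_nonneg _) h1 n
      have h3 : (0:ℝ) < (Nat.factorial n : ℝ) := by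
        exact_mod_cast Nat.factorial_pos n
      exact div_le_div_of_nonneg_right h2 h3.le
    calc (∫ θ, ‖F n θ‖ ∂μ) = ‖∫ θ, ‖F n θ‖ ∂μ‖ :=
          (Real.norm_of_nonneg (integral_nonneg fun θ => norm_nonneg _)).symm
      _ ≤ |x| ^ n / (Nat.factorial n : ℝ) * (volume (Set.Ioc (0:ℝ) π)).toReal := by
          apply norm_setIntegral_le_of_norm_le_const (by simp [Real.volume_Ioc]) hb
      _ = |x| ^ n / (Nat.factorial n : ℝ) * π := by rw [hvol]
  have hsum : Summable fun n => ∫ θ, ‖F n θ‖ ∂μ := by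
    refine Summable.of_nonneg_of_le (fun n => integral_nonneg fun θ => norm_nonneg _) hnorm ?_
    exact (hasSum_exp_real |x|).summable.mul_right π
  have hswap := MeasureTheory.hasSum_integral_of_summable_integral_norm hFint hsum
  have htsum : (∫ θ, (∑' n, F n θ) ∂μ) = π * besselI0 x := by
    have : ∀ θ, (∑' n, F n θ) = Real.exp (x * Real.cos θ) := fun θ =>
      (hasSum_exp_real (x * Real.cos θ)).tsum_eq
    simp_rw [this]
    rw [hμ, ← intervalIntegral.integral_of_le hps, besselI0]
    field_simp
  rw [htsum] at hswap
  have hFn : ∀ n, (∫ θ, F n θ ∂μ) = x ^ n / (Nat.factorial n : ℝ) * ∫ θ in (0:ℝ)..π,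
      Real.cos θ ^ n := by
    intro n
    rw [hμ, ← intervalIntegral.integral_of_le hps, ← intervalIntegral.integral_const_mul]
    congr 1
    funext θ
    rw [hF]
    simp only [mul_pow]
    ring
  simp_rw [hFn] at hswap
  have hinj : Function.Injective (fun k : ℕ => 2 * k) := fun a b hab => by simpa using hab
  have h0 : ∀ n ∉ Set.range (fun k : ℕ => 2 * k),
      x ^ n / (Nat.factorial n : ℝ) * ∫ θ in (0:ℝ)..π, Real.cos θ ^ n = 0 := by
    intro n hn
    rcases Nat.even_or_odd n with ⟨k, hk⟩ | ⟨k, hk⟩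
    · exact absurd ⟨k, by simp; omega⟩ hn
    · rw [hk, integral_cos_pow_odd, mul_zero]
  have h2 := (hinj.hasSum_iff h0).mpr hswap
  have h3 := h2.div_const π
  have hπ : (π : ℝ) ≠ 0 := Real.pi_ne_zero
  have h4 : π * besselI0 x / π = besselI0 x := by field_simp
  have h5 : (fun i => ((fun n => x ^ n / (Nat.factorial n : ℝ) * ∫ θ in (0:ℝ)..π,
      Real.cos θ ^ n) ∘ fun k => 2 * k) i / π)
      = fun k => (∏ i ∈ range k, (2 * (i:ℝ) + 1) / (2 * i + 2)) / (Nat.factorial (2 * k) : ℝ)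
        * x ^ (2 * k) := by
    funext k
    simp only [Function.comp]
    rw [integral_cos_pow_even]
    have hfac : ((Nat.factorial (2 * k) : ℝ)) ≠ 0 := by
      exact_mod_cast Nat.factorial_ne_zero (2 * k)
    field_simp
  rw [h4, h5] at h3
  exact h3

lemma key_integral (b : ℝ) (hb : 0 < b) :
    ∫ u in (-1:ℝ)..1, besselI0 (b * Real.sqrt (1 - u ^ 2)) = 2 * Real.sinh b / b := by
  set c : ℕ → ℝ := fun k =>
    (∏ i ∈ range k, (2 * (i:ℝ) + 1) / (2 * i + 2)) / (Nat.factorial (2 * k) : ℝ) with hc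
  set G : ℕ → ℝ → ℝ := fun k u => c k * b ^ (2 * k) * (1 - u ^ 2) ^ k with hG
  have hle : (-1:ℝ) ≤ 1 := by norm_num
  set μ := volume.restrict (Set.Ioc (-1:ℝ) 1) with hμ
  have hcnn : ∀ k, 0 ≤ c k := by
    intro k
    apply div_nonneg _ (by positivity)
    exact Finset.prod_nonneg fun i _ => by positivity
  have hcle : ∀ k, c k ≤ 1 / (Nat.factorial (2 * k) : ℝ) := by
    intro k
    apply div_le_div_of_nonneg_right _ (by positivity)
    calc ∏ i ∈ range k, (2 * (i:ℝ) + 1) / (2 * i + 2)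
        ≤ ∏ i ∈ range k, 1 := by
          apply Finset.prod_le_prod (fun i _ => by positivity)
          intro i _
          rw [div_le_one (by positivity)]
          linarith
      _ = 1 := by simp
  -- pointwise sum on Ioc
  have hpt : ∀ u ∈ Set.Icc (-1:ℝ) 1, HasSum (fun k => G k u)
      (besselI0 (b * Real.sqrt (1 - u ^ 2))) := by
    intro u hu
    have h1 : (0:ℝ) ≤ 1 - u ^ 2 := by nlinarith [hu.1, hu.2]
    have h2 := besselI0_hasSum (b * Real.sqrt (1 - u ^ 2))
    convert h2 using 1
    funext k
    rw [hG, hc]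
    have : (b * Real.sqrt (1 - u ^ 2)) ^ (2 * k) = b ^ (2 * k) * (1 - u ^ 2) ^ k := by
      rw [mul_pow, pow_mul (Real.sqrt (1 - u ^ 2)), Real.sq_sqrt h1]
    rw [this]
    ring
  have hGint : ∀ k, Integrable (G k) μ := fun k => Continuous.integrableOn_Ioc (by fun_prop)
  have hvol : (volume (Set.Ioc (-1:ℝ) 1)).toReal = 2 := by
    rw [Real.volume_Ioc]
    norm_num
  have hbound : ∀ k, (∫ u, ‖G k u‖ ∂μ) ≤ b ^ (2 * k) / (Nat.factorial (2 * k) : ℝ) * 2 := by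
    intro k
    have hbnd : ∀ u ∈ Set.Ioc (-1:ℝ) 1, ‖‖G k u‖‖ ≤ b ^ (2 * k) / (Nat.factorial (2 * k) : ℝ) := by
      intro u hu
      have h1 : (0:ℝ) ≤ 1 - u ^ 2 := by nlinarith [hu.1, hu.2]
      have h2 : (1 - u ^ 2) ^ k ≤ 1 := pow_le_one₀ h1 (by nlinarith [hu.1, hu.2])
      rw [norm_norm, hG, Real.norm_eq_abs]
      rw [abs_of_nonneg (by positivity)]
      calc c k * b ^ (2 * k) * (1 - u ^ 2) ^ k ≤ c k * b ^ (2 * k) * 1 := by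
            apply mul_le_mul_of_nonneg_left h2 (by positivity)
        _ = c k * b ^ (2 * k) := mul_one _
        _ ≤ 1 / (Nat.factorial (2 * k) : ℝ) * b ^ (2 * k) := by
            apply mul_le_mul_of_nonneg_right (hcle k) (by positivity)
        _ = b ^ (2 * k) / (Nat.factorial (2 * k) : ℝ) := by ring
    calc (∫ u, ‖G k u‖ ∂μ) = ‖∫ u, ‖G k u‖ ∂μ‖ :=
          (Real.norm_of_nonneg (integral_nonneg fun u => norm_nonneg _)).symm
      _ ≤ b ^ (2 * k) / (Nat.factorial (2 * k) : ℝ) * (volume (Set.Ioc (-1:ℝ) 1)).toReal := by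
          apply norm_setIntegral_le_of_norm_le_const (by simp [Real.volume_Ioc]) hbnd
      _ = b ^ (2 * k) / (Nat.factorial (2 * k) : ℝ) * 2 := by rw [hvol]
  have hsum : Summable fun k => ∫ u, ‖G k u‖ ∂μ := by
    refine Summable.of_nonneg_of_le (fun k => integral_nonneg fun u => norm_nonneg _) hbound ?_
    have h1 : Summable fun n : ℕ => b ^ n / (Nat.factorial n : ℝ) := (hasSum_exp_real b).summable
    have h2 : Summable fun k : ℕ => b ^ (2 * k) / (Nat.factorial (2 * k) : ℝ) :=
      h1.comp_injective (fun a b hab => by simpa using hab)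
    exact h2.mul_right 2
  have hswap := MeasureTheory.hasSum_integral_of_summable_integral_norm hGint hsum
  -- identify ∫ tsum
  have htsum : (∫ u, (∑' k, G k u) ∂μ) = ∫ u in (-1:ℝ)..1, besselI0 (b * Real.sqrt (1 - u ^ 2)) := by
    have h0 : (∫ u, (∑' k, G k u) ∂μ) = ∫ u in Set.Ioc (-1:ℝ) 1, (∑' k, G k u) := rfl
    rw [h0, ← intervalIntegral.integral_of_le hle]
    apply intervalIntegral.integral_congr
    intro u hu
    rw [Set.uIcc_of_le hle] at hu
    exact (hpt u hu).tsum_eq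
  rw [htsum] at hswap
  -- compute per-term integrals
  have hGk : ∀ k, (∫ u, G k u ∂μ) = 2 * b ^ (2 * k) / (Nat.factorial (2 * k + 1) : ℝ) := by
    intro k
    have h1 : (∫ u, G k u ∂μ) = c k * b ^ (2 * k) * ∫ u in (-1:ℝ)..1, (1 - u ^ 2) ^ k := by
      rw [← intervalIntegral.integral_const_mul, ← intervalIntegral.integral_of_le hle]
    rw [h1, integral_one_sub_sq_pow, hc]
    have hprod : (∏ i ∈ range k, (2 * (i:ℝ) + 1) / (2 * i + 2))
        * ∏ i ∈ range k, (2 * (i:ℝ) + 2) / (2 * i + 3)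
        = ∏ i ∈ range k, (2 * (i:ℝ) + 1) / (2 * i + 3) := by
      rw [← Finset.prod_mul_distrib]
      apply Finset.prod_congr rfl
      intro i _
      have h2 : (2 * (i:ℝ) + 2) ≠ 0 := by positivity
      have h3 : (2 * (i:ℝ) + 3) ≠ 0 := by positivity
      field_simp
    have hfac : (Nat.factorial (2 * k + 1) : ℝ) = (2 * (k:ℝ) + 1) * (Nat.factorial (2 * k)) := by
      rw [Nat.factorial_succ]
      push_cast
      ring
    have hfz : (Nat.factorial (2 * k) : ℝ) ≠ 0 := by
      exact_mod_cast Nat.factorial_ne_zero (2 * k)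
    have hkz : (2 * (k:ℝ) + 1) ≠ 0 := by positivity
    calc (∏ i ∈ range k, (2 * (i:ℝ) + 1) / (2 * i + 2)) / (Nat.factorial (2 * k) : ℝ)
          * b ^ (2 * k) * (2 * ∏ i ∈ range k, (2 * (i:ℝ) + 2) / (2 * i + 3))
        = 2 * b ^ (2 * k) / (Nat.factorial (2 * k) : ℝ)
          * ((∏ i ∈ range k, (2 * (i:ℝ) + 1) / (2 * i + 2))
             * ∏ i ∈ range k, (2 * (i:ℝ) + 2) / (2 * i + 3)) := by ring
      _ = 2 * b ^ (2 * k) / (Nat.factorial (2 * k) : ℝ) * (1 / (2 * k + 1)) := by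
          rw [hprod, prod_odd_telescope]
      _ = 2 * b ^ (2 * k) / (Nat.factorial (2 * k + 1) : ℝ) := by
          rw [hfac]
          field_simp
  simp_rw [hGk] at hswap
  -- compare with sinh series
  have hbne : b ≠ 0 := hb.ne'
  have hsinh := (hasSum_sinh_odd b).mul_left (2 / b)
  have heq : (fun k => 2 / b * (b ^ (2 * k + 1) / (Nat.factorial (2 * k + 1) : ℝ)))
      = fun k => 2 * b ^ (2 * k) / (Nat.factorial (2 * k + 1) : ℝ) := by
    funext k
    have hfz : (Nat.factorial (2 * k + 1) : ℝ) ≠ 0 := by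
      exact_mod_cast Nat.factorial_ne_zero (2 * k + 1)
    rw [pow_succ]
    field_simp
  rw [heq] at hsinh
  have := hswap.unique hsinh
  rw [this]
  ring

lemma kbWindowDeriv_eq_indicator (b δ : ℝ) :
    kbWindowDeriv b δ = (Set.Icc (0:ℝ) δ).indicator
      (fun t => (b / (δ * Real.sinh b)) * besselI0 (b * Real.sqrt (1 - (2 * t / δ - 1) ^ 2))) := by
  funext t
  rw [kbWindowDeriv, Set.indicator]
  simp [Set.mem_Icc]

lemma kbWindowDeriv_intervalIntegrable (b δ x y : ℝ) :
    IntervalIntegrable (kbWindowDeriv b δ) volume x y := by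
  rw [kbWindowDeriv_eq_indicator, intervalIntegrable_iff]
  apply MeasureTheory.Integrable.indicator _ measurableSet_Icc
  apply Continuous.integrableOn_uIoc
  have := besselI0_continuous
  fun_prop

lemma kbWindowDeriv_nonneg (b δ : ℝ) (hb : 0 < b) (hδ : 0 < δ) (t : ℝ) :
    0 ≤ kbWindowDeriv b δ t := by
  rw [kbWindowDeriv]
  split
  · have hs : 0 < Real.sinh b := Real.sinh_pos_iff.mpr hb
    exact mul_nonneg (by positivity) (besselI0_nonneg _)
  · exact le_refl 0

lemma kbWindowDeriv_total (b δ : ℝ) (hb : 0 < b) (hδ : 0 < δ) :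
    ∫ t in (0:ℝ)..δ, kbWindowDeriv b δ t = 1 := by
  have hδne : δ ≠ 0 := hδ.ne'
  have hbne : b ≠ 0 := hb.ne'
  have hsinh : Real.sinh b ≠ 0 := (Real.sinh_pos_iff.mpr hb).ne'
  have h1 : ∫ t in (0:ℝ)..δ, kbWindowDeriv b δ t
      = ∫ t in (0:ℝ)..δ, (b / (δ * Real.sinh b))
        * besselI0 (b * Real.sqrt (1 - (2 * t / δ - 1) ^ 2)) := by
    apply intervalIntegral.integral_congr
    intro t ht
    rw [Set.uIcc_of_le hδ.le, Set.mem_Icc] at ht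
    rw [kbWindowDeriv, if_pos ht]
  rw [h1, intervalIntegral.integral_const_mul]
  have h2 : ∀ t : ℝ, 2 * t / δ - 1 = 2 / δ * t + -1 := fun t => by
    field_simp
    ring
  simp_rw [h2]
  have h3 := intervalIntegral.integral_comp_mul_add (a := 0) (b := δ)
    (c := 2 / δ) (d := -1) (fun u => besselI0 (b * Real.sqrt (1 - u ^ 2))) (by positivity)
  have e1 : 2 / δ * 0 + -1 = (-1 : ℝ) := by ring
  have e2 : 2 / δ * δ + -1 = (1 : ℝ) := by field_simp; norm_num
  rw [e1, e2] at h3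
  rw [h3, key_integral b hb, smul_eq_mul, inv_div]
  field_simp

/-- The blending window `φ` vanishes for `t ≤ 0`, is nondecreasing, and equals `1`
for `t ≥ δ`. -/
theorem kb_window_blending (b δ : ℝ) (hb : 0 < b) (hδ : 0 < δ) :
    (∀ t ≤ (0:ℝ), kbWindow b δ t = 0) ∧
    Monotone (kbWindow b δ) ∧
    (∀ t, δ ≤ t → kbWindow b δ t = 1) := by
  have hint := kbWindowDeriv_intervalIntegrable b δ
  have hnn := kbWindowDeriv_nonneg b δ hb hδ
  refine ⟨?_, ?_, ?_⟩
  · intro t ht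
    rw [kbWindow, intervalIntegral.integral_symm, intervalIntegral.integral_of_le ht]
    have hz : ∀ᵐ τ : ℝ, τ ≠ (0:ℝ) := by
      have hset : {τ : ℝ | ¬ τ ≠ 0} = {0} := by ext τ; simp
      rw [MeasureTheory.ae_iff, hset]
      exact measure_singleton 0
    have h0 : ∀ᵐ τ : ℝ, τ ∈ Set.Ioc t 0 → kbWindowDeriv b δ τ = 0 := by
      filter_upwards [hz] with τ hτ hmem
      rw [kbWindowDeriv, if_neg]
      rintro ⟨ha, _⟩
      exact hτ (le_antisymm hmem.2 ha)
    rw [MeasureTheory.setIntegral_congr_ae measurableSet_Ioc h0]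
    simp
  · intro s t hst
    have hadd := intervalIntegral.integral_add_adjacent_intervals (hint 0 s) (hint s t)
    rw [kbWindow, kbWindow, ← hadd]
    have hpos : 0 ≤ ∫ τ in s..t, kbWindowDeriv b δ τ :=
      intervalIntegral.integral_nonneg hst fun u _ => hnn u
    linarith
  · intro t ht
    have hadd := intervalIntegral.integral_add_adjacent_intervals (hint 0 δ) (hint δ t)
    rw [kbWindow, ← hadd, kbWindowDeriv_total b δ hb hδ]
    have hz : ∫ τ in δ..t, kbWindowDeriv b δ τ = 0 := by
      rw [intervalIntegral.integral_of_le ht,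
        MeasureTheory.setIntegral_congr_fun measurableSet_Ioc
          (g := fun _ => (0:ℝ)) ?_]
      · simp
      · intro τ hτ
        rw [kbWindowDeriv, if_neg]
        rintro ⟨_, hb2⟩
        exact absurd hτ.1 (not_lt.mpr hb2)
    rw [hz, add_zero]
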